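/- Let K ⊆ ℝ^d be a convex compact set with ‖x − y‖₂ ≤ D for all x, y ∈ K, let x_s ∈ K, η > 0, and let g₁,…,g_n ∈ ℝ^d. For 0 ≤ j ≤ n define F_j(x) = η ∑_{i=1}^{j} ⟨g_i, x⟩ + ‖x − x_s‖₂², and for 1 ≤ j ≤ n let x*_j ∈ K be a minimizer of F_{j−1} over K. Then for every x* ∈ K, ∑_{j=1}^{n} ⟨g_j, x*_j − x*⟩ ≤ D²/η + η ∑_{j=1}^{n} ‖g_j‖₂². -/

import Mathlib

open Finset

/-- Strong-convexity property of minimizers of `y ↦ ⟪c, y⟫ + ‖y - xs‖²` over a convex set. -/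
lemma strong_min_aux {E : Type*} [NormedAddCommGroup E] [InnerProductSpace ℝ E]
    {K : Set E} (hK : Convex ℝ K) (c xs : E) {x : E} (hx : x ∈ K)
    (hmin : ∀ y ∈ K, (inner ℝ c x : ℝ) + ‖x - xs‖ ^ 2 ≤ (inner ℝ c y : ℝ) + ‖y - xs‖ ^ 2) :
    ∀ y ∈ K, (inner ℝ c x : ℝ) + ‖x - xs‖ ^ 2 + ‖y - x‖ ^ 2 ≤
      (inner ℝ c y : ℝ) + ‖y - xs‖ ^ 2 := by
  intro y hy
  set A : ℝ := (inner ℝ c y : ℝ) - (inner ℝ c x : ℝ) + 2 * (inner ℝ (x - xs) (y - x) : ℝ) with hA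
  set B : ℝ := ‖y - x‖ ^ 2 with hB
  have hBnn : 0 ≤ B := by positivity
  have key : ∀ t : ℝ, 0 < t → t ≤ 1 → 0 ≤ A + t * B := by
    intro t ht0 ht1
    have hz : x + t • (y - x) ∈ K := by
      have := hK hx hy (by linarith : (0:ℝ) ≤ 1 - t) ht0.le (by ring)
      convert this using 1
      module
    have h1 := hmin _ hz
    have e1 : (inner ℝ c (x + t • (y - x)) : ℝ)
        = (inner ℝ c x : ℝ) + t * ((inner ℝ c y : ℝ) - (inner ℝ c x : ℝ)) := by
      rw [inner_add_right, real_inner_smul_right, inner_sub_right]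
    have e2 : ‖x + t • (y - x) - xs‖ ^ 2
        = ‖x - xs‖ ^ 2 + 2 * (t * (inner ℝ (x - xs) (y - x) : ℝ)) + t ^ 2 * ‖y - x‖ ^ 2 := by
      have h3 : x + t • (y - x) - xs = (x - xs) + t • (y - x) := by abel
      rw [h3, norm_add_sq_real, real_inner_smul_right, norm_smul]
      rw [mul_pow, Real.norm_eq_abs, sq_abs]
    rw [e1, e2] at h1
    nlinarith
  have hA0 : 0 ≤ A := by
    by_contra h
    push_neg at h
    rcases eq_or_lt_of_le hBnn with hB0 | hB0
    · have := key 1 one_pos le_rfl; nlinarith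
    · have hpos : 0 < -A / (2 * B) := div_pos (by linarith) (by linarith)
      have hmem := key (min 1 (-A / (2 * B))) (lt_min one_pos hpos) (min_le_left _ _)
      have hle : min 1 (-A / (2 * B)) * B ≤ (-A / (2 * B)) * B :=
        mul_le_mul_of_nonneg_right (min_le_right _ _) hBnn
      have heq : (-A / (2 * B)) * B = -A / 2 := by field_simp
      nlinarith
  have e3 : ‖y - xs‖ ^ 2
      = ‖x - xs‖ ^ 2 + 2 * (inner ℝ (x - xs) (y - x) : ℝ) + ‖y - x‖ ^ 2 := by
    have h3 : y - xs = (x - xs) + (y - x) := by abel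
    rw [h3, norm_add_sq_real]
  rw [e3]
  simp only [hA] at hA0
  linarith

/-- **FTRL-style bound for the leaders.** If `x*_j` minimizes
`F_{j−1}(x) = η ∑_{i<j} ⟨g_i, x⟩ + ‖x − x_s‖²` over `K` for each `j`, then for every `x* ∈ K`,
`∑_{j=1}^n ⟨g_j, x*_j − x*⟩ ≤ D²/η + η ∑_{j=1}^n ‖g_j‖²`. -/
theorem ftrl_leader_regret_bound
    {d : ℕ} (K : Set (EuclideanSpace ℝ (Fin d))) (hK : Convex ℝ K) (hKcpt : IsCompact K)
    (D : ℝ) (hD : ∀ x ∈ K, ∀ y ∈ K, ‖x - y‖ ≤ D)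
    (xs : EuclideanSpace ℝ (Fin d)) (hxs : xs ∈ K)
    (η : ℝ) (hη : 0 < η)
    (n : ℕ) (g : ℕ → EuclideanSpace ℝ (Fin d))
    (F : ℕ → EuclideanSpace ℝ (Fin d) → ℝ)
    (hF : ∀ j, ∀ y, F j y = η * ∑ i ∈ Finset.Icc 1 j, (inner ℝ (g i) y : ℝ) + ‖y - xs‖ ^ 2)
    (xstar : ℕ → EuclideanSpace ℝ (Fin d))
    (hxstar : ∀ j ∈ Finset.Icc 1 n, xstar j ∈ K ∧ ∀ y ∈ K, F (j - 1) (xstar j) ≤ F (j - 1) y) :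
    ∀ z ∈ K, ∑ j ∈ Finset.Icc 1 n, (inner ℝ (g j) (xstar j - z) : ℝ) ≤
      D ^ 2 / η + η * ∑ j ∈ Finset.Icc 1 n, ‖g j‖ ^ 2 := by
  intro z hz
  have hD0 : 0 ≤ D := le_trans (norm_nonneg _) (hD xs hxs xs hxs)
  rcases Nat.eq_zero_or_pos n with hn0 | hn1
  · subst hn0
    simp only [Finset.Icc_self, Finset.Icc_eq_empty_of_lt (by norm_num : (1:ℕ) > 0),
      Finset.sum_empty, mul_zero, add_zero]
    positivity
  -- rewrite F in inner-product form
  set c : ℕ → EuclideanSpace ℝ (Fin d) := fun j => η • ∑ i ∈ Finset.Icc 1 j, g i with hc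
  have hFc : ∀ j y, F j y = (inner ℝ (c j) y : ℝ) + ‖y - xs‖ ^ 2 := by
    intro j y
    rw [hF]
    congr 1
    rw [show c j = η • ∑ i ∈ Finset.Icc 1 j, g i from rfl, real_inner_smul_left, sum_inner]
  have hcsucc : ∀ (j : ℕ) y, 1 ≤ j →
      (inner ℝ (c j) y : ℝ) = (inner ℝ (c (j - 1)) y : ℝ) + η * (inner ℝ (g j) y : ℝ) := by
    intro j y hj
    obtain ⟨m, rfl⟩ : ∃ m, j = m + 1 := ⟨j - 1, by omega⟩
    simp only [hc, Nat.add_sub_cancel]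
    rw [Finset.sum_Icc_succ_top (by omega : 1 ≤ m + 1), smul_add, inner_add_left,
      real_inner_smul_left, real_inner_smul_left]
  -- a minimizer of F n
  have hcont : ContinuousOn (F n) K := by
    have hcts : Continuous (fun y : EuclideanSpace ℝ (Fin d) =>
        (inner ℝ (c n) y : ℝ) + ‖y - xs‖ ^ 2) :=
      (continuous_const.inner continuous_id).add
        (((continuous_id.sub continuous_const).norm).pow 2)
    have hFn : F n = fun y => (inner ℝ (c n) y : ℝ) + ‖y - xs‖ ^ 2 := funext (hFc n)
    rw [hFn]
    exact hcts.continuousOn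
  obtain ⟨wl, hwlK, hwlmin⟩ := hKcpt.exists_isMinOn ⟨xs, hxs⟩ hcont
  set w : ℕ → EuclideanSpace ℝ (Fin d) := fun j => if j ≤ n then xstar j else wl with hw
  have hwK : ∀ j, 1 ≤ j → j ≤ n + 1 → w j ∈ K := by
    intro j h1 h2
    by_cases hjn : j ≤ n
    · simp only [hw, if_pos hjn]
      exact (hxstar j (Finset.mem_Icc.mpr ⟨h1, hjn⟩)).1
    · simp only [hw, if_neg hjn]; exact hwlK
  have hwmin : ∀ j, 1 ≤ j → j ≤ n + 1 → ∀ y ∈ K, F (j - 1) (w j) ≤ F (j - 1) y := by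
    intro j h1 h2 y hy
    by_cases hjn : j ≤ n
    · simp only [hw, if_pos hjn]
      exact (hxstar j (Finset.mem_Icc.mpr ⟨h1, hjn⟩)).2 y hy
    · have : j = n + 1 := by omega
      subst this
      simp only [hw, if_neg hjn, Nat.add_sub_cancel]
      exact hwlmin hy
  -- strong minimality
  have hstrong : ∀ j, 1 ≤ j → j ≤ n + 1 → ∀ y ∈ K,
      F (j - 1) (w j) + ‖y - w j‖ ^ 2 ≤ F (j - 1) y := by
    intro j h1 h2 y hy
    have := strong_min_aux hK (c (j - 1)) xs (hwK j h1 h2)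
      (fun y hy => by rw [← hFc, ← hFc]; exact hwmin j h1 h2 y hy) y hy
    rw [hFc, hFc]
    linarith [this]
  -- be-the-leader induction
  have hBTL : ∀ m, m ≤ n → ∀ z' ∈ K,
      ∑ j ∈ Finset.Icc 1 m, η * (inner ℝ (g j) (w (j + 1)) : ℝ) + ‖w 1 - xs‖ ^ 2 ≤ F m z' := by
    intro m
    induction m with
    | zero =>
      intro _ z' hz'
      simp only [Finset.Icc_eq_empty_of_lt (by norm_num : (1:ℕ) > 0), Finset.sum_empty, zero_add]
      have h := hwmin 1 le_rfl (by omega) z' hz'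
      rw [hF, hF] at h
      simp only [Finset.Icc_eq_empty (show ¬(1:ℕ) ≤ 0 by omega), Finset.sum_empty,
        mul_zero, zero_add] at h
      rw [hF]
      simp only [Finset.Icc_eq_empty (show ¬(1:ℕ) ≤ 0 by omega), Finset.sum_empty,
        mul_zero, zero_add]
      exact h
    | succ m ih =>
      intro hm z' hz'
      have hmem : w (m + 2) ∈ K := hwK (m + 2) (by omega) (by omega)
      have ih' := ih (by omega) (w (m + 2)) hmem
      rw [Finset.sum_Icc_succ_top (by omega : 1 ≤ m + 1)]
      have hFsucc : ∀ y, F (m + 1) y = F m y + η * (inner ℝ (g (m + 1)) y : ℝ) := by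
        intro y
        rw [hFc, hFc, hcsucc (m + 1) y (by omega)]
        simp; ring
      have hmin2 := hwmin (m + 2) (by omega) (by omega) z' hz'
      have hmin2' : F (m + 1) (w (m + 2)) ≤ F (m + 1) z' := hmin2
      have e1 := hFsucc (w (m + 2))
      have e2 := hFsucc z'
      have e3 : w (m + 1 + 1) = w (m + 2) := rfl
      rw [e3]
      linarith
  -- stability bound
  have hstab : ∀ j ∈ Finset.Icc 1 n,
      η * (inner ℝ (g j) (w j - w (j + 1)) : ℝ) ≤ η ^ 2 * ‖g j‖ ^ 2 := by
    intro j hj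
    rw [Finset.mem_Icc] at hj
    obtain ⟨hj1, hjn⟩ := hj
    have h1 := hstrong j hj1 (by omega) (w (j + 1)) (hwK (j + 1) (by omega) (by omega))
    have h2 := hstrong (j + 1) (by omega) (by omega) (w j) (hwK j hj1 (by omega))
    simp only [Nat.add_sub_cancel] at h2
    rw [hFc, hFc] at h1
    rw [hFc, hFc] at h2
    rw [hcsucc j (w (j + 1)) hj1, hcsucc j (w j) hj1] at h2
    have hnrm : ‖w (j + 1) - w j‖ = ‖w j - w (j + 1)‖ := norm_sub_rev _ _
    have hnrm2 : ‖w (j + 1) - w j‖ ^ 2 = ‖w j - w (j + 1)‖ ^ 2 := by rw [hnrm]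
    have hkey : 2 * ‖w j - w (j + 1)‖ ^ 2 ≤ η * (inner ℝ (g j) (w j - w (j + 1)) : ℝ) := by
      rw [inner_sub_right]
      nlinarith [h1, h2, hnrm2]
    have hCS : (inner ℝ (g j) (w j - w (j + 1)) : ℝ) ≤ ‖g j‖ * ‖w j - w (j + 1)‖ :=
      real_inner_le_norm _ _
    nlinarith [norm_nonneg (w j - w (j + 1)), norm_nonneg (g j),
      sq_nonneg (η * ‖g j‖ - 2 * ‖w j - w (j + 1)‖)]
  -- assemble
  have hxw : ∀ j ∈ Finset.Icc 1 n, xstar j = w j := by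
    intro j hj
    rw [Finset.mem_Icc] at hj
    simp [hw, hj.2]
  have hBTLz := hBTL n le_rfl z hz
  rw [hFc] at hBTLz
  have hDz : ‖z - xs‖ ^ 2 ≤ D ^ 2 := by
    have := hD z hz xs hxs
    nlinarith [norm_nonneg (z - xs)]
  have hsum1 : ∑ j ∈ Finset.Icc 1 n, η * (inner ℝ (g j) (w j - w (j + 1)) : ℝ)
      ≤ η ^ 2 * ∑ j ∈ Finset.Icc 1 n, ‖g j‖ ^ 2 := by
    rw [Finset.mul_sum]
    exact Finset.sum_le_sum hstab
  have hcz : (inner ℝ (c n) z : ℝ) = ∑ j ∈ Finset.Icc 1 n, η * (inner ℝ (g j) z : ℝ) := by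
    rw [show c n = η • ∑ i ∈ Finset.Icc 1 n, g i from rfl, real_inner_smul_left, sum_inner,
      Finset.mul_sum]
  have hsplit : η * ∑ j ∈ Finset.Icc 1 n, (inner ℝ (g j) (xstar j - z) : ℝ)
      = ∑ j ∈ Finset.Icc 1 n, η * (inner ℝ (g j) (w j - w (j + 1)) : ℝ)
        + ∑ j ∈ Finset.Icc 1 n, η * (inner ℝ (g j) (w (j + 1)) : ℝ)
        - ∑ j ∈ Finset.Icc 1 n, η * (inner ℝ (g j) z : ℝ) := by
    rw [Finset.mul_sum, ← Finset.sum_add_distrib, ← Finset.sum_sub_distrib]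
    apply Finset.sum_congr rfl
    intro j hj
    rw [hxw j hj, inner_sub_right, inner_sub_right]
    ring
  have hkey : η * ∑ j ∈ Finset.Icc 1 n, (inner ℝ (g j) (xstar j - z) : ℝ)
      ≤ D ^ 2 + η ^ 2 * ∑ j ∈ Finset.Icc 1 n, ‖g j‖ ^ 2 := by
    rw [hsplit]
    have hnn : 0 ≤ ‖w 1 - xs‖ ^ 2 := by positivity
    linarith [hBTLz, hsum1, hDz, hcz.symm.le, hcz.le]
  calc ∑ j ∈ Finset.Icc 1 n, (inner ℝ (g j) (xstar j - z) : ℝ)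
      ≤ (D ^ 2 + η ^ 2 * ∑ j ∈ Finset.Icc 1 n, ‖g j‖ ^ 2) / η := by
        rw [le_div_iff₀ hη]; nlinarith [hkey]
    _ = D ^ 2 / η + η * ∑ j ∈ Finset.Icc 1 n, ‖g j‖ ^ 2 := by
        field_simp
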